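/- Let n = p+q with p ≥ q ≥ 1, let X be an n×n Hermitian matrix with eigenvalues λ_1 ≥ ... ≥ λ_n, and let s_1 ≥ ... ≥ s_q ≥ 0 be the singular values of the upper-right p×q block of X. Then for every k with 1 ≤ k ≤ q: λ_k − λ_n ≥ 2 s_k and λ_1 − λ_{n+1−k} ≥ 2 s_k. -/

import Mathlib

open Matrix
open scoped ComplexOrder

noncomputable section

/-- `lam` is the weakly decreasing list of eigenvalues of the Hermitian matrix `X`. -/
def IsEigList {n : ℕ} {X : Matrix (Fin n) (Fin n) ℂ} (hX : X.IsHermitian)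
    (lam : Fin n → ℝ) : Prop :=
  Antitone lam ∧ ∃ e : Fin n ≃ Fin n, ∀ i, lam i = hX.eigenvalues (e i)

/-- `s` is the weakly decreasing list of singular values of `Y`. -/
def IsSingList {p q : ℕ} (Y : Matrix (Fin p) (Fin q) ℂ) (s : Fin q → ℝ) : Prop :=
  Antitone s ∧ (∀ k, 0 ≤ s k) ∧
    ∃ e : Fin q ≃ Fin q, ∀ k,
      s k ^ 2 = (Matrix.posSemidef_conjTranspose_mul_self Y).1.eigenvalues (e k)

/-- The upper-right `p × q` block of an `(p+q) × (p+q)` matrix. -/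
def offBlock {p q : ℕ} (X : Matrix (Fin (p + q)) (Fin (p + q)) ℂ) :
    Matrix (Fin p) (Fin q) ℂ :=
  fun i j => X (Fin.castAdd q i) (Fin.natAdd p j)

/-- The matrix `[[0, Y],[Yᴴ, 0]]`. -/
def blockZ {p q : ℕ} (Y : Matrix (Fin p) (Fin q) ℂ) :
    Matrix (Fin (p + q)) (Fin (p + q)) ℂ :=
  Matrix.reindex finSumFinEquiv finSumFinEquiv (Matrix.fromBlocks 0 Y Yᴴ 0)

/-- `ν(s) = (s₁,…,s_q,0,…,0,−s_q,…,−s₁) ∈ ℝⁿ`, `n = p + q`. -/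
def nuList (p q : ℕ) (s : Fin q → ℝ) : Fin (p + q) → ℝ :=
  fun k =>
    if h : (k : ℕ) < q then s ⟨k, h⟩
    else if h' : p ≤ (k : ℕ) then
      -s ⟨p + q - 1 - (k : ℕ), by have := k.isLt; omega⟩
    else 0

/-- The matrix `I_{p,q} = Diag(I_p, −I_q)`. -/
def Ipq (p q : ℕ) : Matrix (Fin (p + q)) (Fin (p + q)) ℂ :=
  Matrix.diagonal fun k => if (k : ℕ) < p then 1 else -1

/-- The `U(n)`-conjugation orbit of a matrix. -/
def uOrbit {n : ℕ} (X : Matrix (Fin n) (Fin n) ℂ) : Set (Matrix (Fin n) (Fin n) ℂ) :=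
  { Y | ∃ g ∈ Matrix.unitaryGroup (Fin n) ℂ, Y = g * X * star g }

/-- Membership in the Horn cone `Horn(n)`. -/
def HornMem {n : ℕ} (x y z : Fin n → ℝ) : Prop :=
  ∃ (A B : Matrix (Fin n) (Fin n) ℂ) (hA : A.IsHermitian) (hB : B.IsHermitian)
    (hC : (A + B).IsHermitian), IsEigList hA x ∧ IsEigList hB y ∧ IsEigList hC z

lemma quad_expand {n : ℕ} {X : Matrix (Fin n) (Fin n) ℂ} (hX : X.IsHermitian) (u : Fin n → ℂ) :
    (star u ⬝ᵥ (X *ᵥ u)).re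
      = ∑ i, hX.eigenvalues i *
          Complex.normSq ((star (hX.eigenvectorUnitary : Matrix (Fin n) (Fin n) ℂ) *ᵥ u) i) ∧
    (star u ⬝ᵥ u).re
      = ∑ i, Complex.normSq ((star (hX.eigenvectorUnitary : Matrix (Fin n) (Fin n) ℂ) *ᵥ u) i) := by
  set U := (hX.eigenvectorUnitary : Matrix (Fin n) (Fin n) ℂ) with hU
  have hUU : U * star U = 1 := mem_unitaryGroup_iff.mp hX.eigenvectorUnitary.2
  set r := star U *ᵥ u with hr
  have hstarr : star r = star u ᵥ* U := by
    rw [hr, star_mulVec, star_eq_conjTranspose, conjTranspose_conjTranspose]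
  have hterm : ∀ (c : ℝ) (z : ℂ), ((starRingEnd ℂ) z * ((c:ℂ) * z)).re = c * Complex.normSq z := by
    intro c z
    rw [show (starRingEnd ℂ) z * ((c:ℂ) * z) = (c:ℂ) * ((starRingEnd ℂ) z * z) by ring,
      Complex.normSq_eq_conj_mul_self.symm]
    rw [← Complex.ofReal_mul, Complex.ofReal_re]
  constructor
  · have h1 : star u ⬝ᵥ (X *ᵥ u) = star r ⬝ᵥ (diagonal (RCLike.ofReal ∘ hX.eigenvalues) *ᵥ r) := by
      conv_lhs => rw [hX.spectral_theorem, Unitary.conjStarAlgAut_apply]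
      rw [← hU, ← mulVec_mulVec, ← mulVec_mulVec, dotProduct_mulVec, ← hstarr, ← hr]
    rw [h1, dotProduct, Complex.re_sum]
    refine Finset.sum_congr rfl fun i _ => ?_
    rw [mulVec_diagonal]
    simpa using hterm (hX.eigenvalues i) (r i)
  · have h2 : star u ⬝ᵥ u = star r ⬝ᵥ r := by
      rw [hstarr, hr, ← dotProduct_mulVec, mulVec_mulVec, hUU, one_mulVec]
    rw [h2, dotProduct, Complex.re_sum]
    refine Finset.sum_congr rfl fun i _ => ?_
    simpa using hterm 1 (r i)

lemma key_lower {n k : ℕ} {X : Matrix (Fin n) (Fin n) ℂ} (hX : X.IsHermitian) (c : ℝ)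
    (w : Fin (k + 1) → (Fin n → ℂ))
    (hind : ∀ a : Fin (k + 1) → ℂ, ∑ j, a j • w j = 0 → a = 0)
    (hray : ∀ a : Fin (k + 1) → ℂ,
      c * (star (∑ j, a j • w j) ⬝ᵥ (∑ j, a j • w j)).re
        ≤ (star (∑ j, a j • w j) ⬝ᵥ (X *ᵥ ∑ j, a j • w j)).re) :
    k + 1 ≤ (Finset.univ.filter fun i => c ≤ hX.eigenvalues i).card := by
  by_contra hcon
  push_neg at hcon
  set U := (hX.eigenvectorUnitary : Matrix (Fin n) (Fin n) ℂ) with hU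
  have hUU : U * star U = 1 := mem_unitaryGroup_iff.mp hX.eigenvectorUnitary.2
  set T := (Finset.univ.filter fun i => c ≤ hX.eigenvalues i) with hT
  set M : Matrix ↥T (Fin (k + 1)) ℂ := fun t j => (star U *ᵥ w j) t.1 with hM
  have hnotinj : ¬ Function.Injective M.mulVecLin := by
    intro hinj
    have := LinearMap.finrank_le_finrank_of_injective hinj
    simp only [Module.finrank_pi, Fintype.card_coe, Fintype.card_fin] at this
    omega
  obtain ⟨a, ha0, hMa⟩ : ∃ a, a ≠ 0 ∧ M *ᵥ a = 0 := by
    rw [← LinearMap.ker_eq_bot] at hnotinj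
    obtain ⟨a, haker, ha⟩ := (Submodule.ne_bot_iff _).1 hnotinj
    exact ⟨a, ha, by simpa [Matrix.mulVecLin_apply] using haker⟩
  set v := ∑ j, a j • w j with hv
  have hv0 : v ≠ 0 := fun h => ha0 (hind a h)
  set r := star U *ᵥ v with hr
  have hre : r = ∑ j, a j • (star U *ᵥ w j) := by
    simp only [hr, hv, ← Matrix.mulVecLin_apply, map_sum, _root_.map_smul]
  have hrT : ∀ t (ht : t ∈ T), r t = 0 := by
    intro t ht
    have h0 : (M *ᵥ a) ⟨t, ht⟩ = 0 := by rw [hMa]; rfl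
    rw [hre]
    rw [Finset.sum_apply]
    simp only [Pi.smul_apply, smul_eq_mul]
    rw [show (0:ℂ) = (M *ᵥ a) ⟨t, ht⟩ from h0.symm]
    simp only [Matrix.mulVec, dotProduct, hM]
    exact Finset.sum_congr rfl fun j _ => mul_comm _ _
  have hvr : v = U *ᵥ r := by rw [hr, mulVec_mulVec, hUU, one_mulVec]
  have hr0 : r ≠ 0 := fun h => hv0 (by rw [hvr, h, Matrix.mulVec_zero])
  obtain ⟨i0, hi0⟩ := Function.ne_iff.1 hr0
  simp only [Pi.zero_apply] at hi0
  have hi0T : i0 ∉ T := fun h => hi0 (hrT i0 h)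
  obtain ⟨hQ, hN⟩ := quad_expand hX v
  have hray' := hray a
  rw [← hv] at hray'
  rw [hQ, hN, ← hU, ← hr] at hray'
  have hlt : ∑ i, hX.eigenvalues i * Complex.normSq (r i)
      < c * ∑ i, Complex.normSq (r i) := by
    rw [Finset.mul_sum]
    refine Finset.sum_lt_sum (fun i _ => ?_) ⟨i0, Finset.mem_univ _, ?_⟩
    · by_cases hiT : i ∈ T
      · rw [hrT i hiT]; simp
      · have hlti : hX.eigenvalues i < c := by
          simpa [hT] using hiT
        nlinarith [Complex.normSq_nonneg (r i)]
    · have hlti : hX.eigenvalues i0 < c := by simpa [hT] using hi0T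
      have hpos : 0 < Complex.normSq (r i0) := by
        simpa [Complex.normSq_pos] using hi0
      exact mul_lt_mul_of_pos_right hlti hpos
  linarith

lemma key_upper {n k : ℕ} {X : Matrix (Fin n) (Fin n) ℂ} (hX : X.IsHermitian) (c : ℝ)
    (w : Fin (k + 1) → (Fin n → ℂ))
    (hind : ∀ a : Fin (k + 1) → ℂ, ∑ j, a j • w j = 0 → a = 0)
    (hray : ∀ a : Fin (k + 1) → ℂ,
      (star (∑ j, a j • w j) ⬝ᵥ (X *ᵥ ∑ j, a j • w j)).re
        ≤ c * (star (∑ j, a j • w j) ⬝ᵥ (∑ j, a j • w j)).re) :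
    k + 1 ≤ (Finset.univ.filter fun i => hX.eigenvalues i ≤ c).card := by
  by_contra hcon
  push_neg at hcon
  set U := (hX.eigenvectorUnitary : Matrix (Fin n) (Fin n) ℂ) with hU
  have hUU : U * star U = 1 := mem_unitaryGroup_iff.mp hX.eigenvectorUnitary.2
  set T := (Finset.univ.filter fun i => hX.eigenvalues i ≤ c) with hT
  set M : Matrix ↥T (Fin (k + 1)) ℂ := fun t j => (star U *ᵥ w j) t.1 with hM
  have hnotinj : ¬ Function.Injective M.mulVecLin := by
    intro hinj
    have := LinearMap.finrank_le_finrank_of_injective hinj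
    simp only [Module.finrank_pi, Fintype.card_coe, Fintype.card_fin] at this
    omega
  obtain ⟨a, ha0, hMa⟩ : ∃ a, a ≠ 0 ∧ M *ᵥ a = 0 := by
    rw [← LinearMap.ker_eq_bot] at hnotinj
    obtain ⟨a, haker, ha⟩ := (Submodule.ne_bot_iff _).1 hnotinj
    exact ⟨a, ha, by simpa [Matrix.mulVecLin_apply] using haker⟩
  set v := ∑ j, a j • w j with hv
  have hv0 : v ≠ 0 := fun h => ha0 (hind a h)
  set r := star U *ᵥ v with hr
  have hre : r = ∑ j, a j • (star U *ᵥ w j) := by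
    simp only [hr, hv, ← Matrix.mulVecLin_apply, map_sum, _root_.map_smul]
  have hrT : ∀ t (ht : t ∈ T), r t = 0 := by
    intro t ht
    have h0 : (M *ᵥ a) ⟨t, ht⟩ = 0 := by rw [hMa]; rfl
    rw [hre]
    rw [Finset.sum_apply]
    simp only [Pi.smul_apply, smul_eq_mul]
    rw [show (0:ℂ) = (M *ᵥ a) ⟨t, ht⟩ from h0.symm]
    simp only [Matrix.mulVec, dotProduct, hM]
    exact Finset.sum_congr rfl fun j _ => mul_comm _ _
  have hvr : v = U *ᵥ r := by rw [hr, mulVec_mulVec, hUU, one_mulVec]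
  have hr0 : r ≠ 0 := fun h => hv0 (by rw [hvr, h, Matrix.mulVec_zero])
  obtain ⟨i0, hi0⟩ := Function.ne_iff.1 hr0
  simp only [Pi.zero_apply] at hi0
  have hi0T : i0 ∉ T := fun h => hi0 (hrT i0 h)
  obtain ⟨hQ, hN⟩ := quad_expand hX v
  have hray' := hray a
  rw [← hv] at hray'
  rw [hQ, hN, ← hU, ← hr] at hray'
  have hlt : c * ∑ i, Complex.normSq (r i)
      < ∑ i, hX.eigenvalues i * Complex.normSq (r i) := by
    rw [Finset.mul_sum]
    refine Finset.sum_lt_sum (fun i _ => ?_) ⟨i0, Finset.mem_univ _, ?_⟩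
    · by_cases hiT : i ∈ T
      · rw [hrT i hiT]; simp
      · have hlti : c < hX.eigenvalues i := by
          simpa [hT] using hiT
        nlinarith [Complex.normSq_nonneg (r i)]
    · have hlti : c < hX.eigenvalues i0 := by simpa [hT] using hi0T
      have hpos : 0 < Complex.normSq (r i0) := by
        simpa [Complex.normSq_pos] using hi0
      exact mul_lt_mul_of_pos_right hlti hpos
  linarith

lemma card_fin_lt_le {n k : ℕ} (P : Fin n → Prop) [DecidablePred P]
    (hP : ∀ j, P j → (j : ℕ) < k) :
    (Finset.univ.filter P).card ≤ k := by
  classical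
  calc (Finset.univ.filter P).card
      ≤ (Finset.range k).card := by
        refine Finset.card_le_card_of_injOn (fun j => (j : ℕ))
          (fun a ha => ?_) (fun a _ b _ h => Fin.ext h)
        simp only [Finset.mem_coe, Finset.mem_filter] at ha
        exact Finset.mem_range.mpr (hP a ha.2)
    _ = k := Finset.card_range k

lemma card_filter_comp_equiv {n : ℕ} (e : Fin n ≃ Fin n) (P : Fin n → Prop) [DecidablePred P] :
    (Finset.univ.filter fun j => P (e j)).card = (Finset.univ.filter P).card := by
  refine Finset.card_equiv e (fun j => ?_)
  simp

lemma lam_ge {n : ℕ} (lam lv : Fin n → ℝ) (hA : Antitone lam) (e : Fin n ≃ Fin n)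
    (he : ∀ i, lam i = lv (e i)) (k : ℕ) (hk : k < n) (c : ℝ)
    (h : k + 1 ≤ (Finset.univ.filter fun i => c ≤ lv i).card) : c ≤ lam ⟨k, hk⟩ := by
  by_contra hc
  push_neg at hc
  have hcard : (Finset.univ.filter fun j => c ≤ lam j).card
      = (Finset.univ.filter fun i => c ≤ lv i).card := by
    refine Finset.card_equiv e (fun j => ?_)
    simp [he]
  have hle : (Finset.univ.filter fun j => c ≤ lam j).card ≤ k := by
    refine card_fin_lt_le _ (fun j hj => ?_)
    by_contra hjk
    push_neg at hjk
    have : lam j ≤ lam ⟨k, hk⟩ := hA (by simpa [Fin.le_def] using hjk)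
    linarith
  omega

lemma lam_le {n : ℕ} (lam lv : Fin n → ℝ) (hA : Antitone lam) (e : Fin n ≃ Fin n)
    (he : ∀ i, lam i = lv (e i)) (k : ℕ) (hk : k < n) (hn : 1 ≤ n) (c : ℝ)
    (h : k + 1 ≤ (Finset.univ.filter fun i => lv i ≤ c).card) :
    lam ⟨n - 1 - k, by omega⟩ ≤ c := by
  by_contra hc
  push_neg at hc
  have hcard : (Finset.univ.filter fun j => lam j ≤ c).card
      = (Finset.univ.filter fun i => lv i ≤ c).card := by
    refine Finset.card_equiv e (fun j => ?_)
    simp [he]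
  have hle : (Finset.univ.filter fun j => lam j ≤ c).card ≤ k := by
    have step : ∀ j : Fin n, lam j ≤ c → n - k ≤ (j : ℕ) := by
      intro j hj
      by_contra hjk
      push_neg at hjk
      have : lam ⟨n - 1 - k, by omega⟩ ≤ lam j := hA (by simp [Fin.le_def]; omega)
      linarith
    calc (Finset.univ.filter fun j => lam j ≤ c).card
        ≤ ((Finset.range n).filter fun m => n - k ≤ m).card := by
          refine Finset.card_le_card_of_injOn (fun j => (j : ℕ))
            (fun a ha => ?_) (fun a _ b _ hab => Fin.ext hab)
          simp only [Finset.mem_coe, Finset.mem_filter] at ha ⊢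
          exact ⟨Finset.mem_range.mpr a.isLt, step a ha.2⟩
      _ ≤ k := by
          calc ((Finset.range n).filter fun m => n - k ≤ m).card
              ≤ ((Finset.range n).filter fun m => m ∈ Finset.Ico (n-k) n).card := by
                apply Finset.card_le_card
                intro m hm
                simp only [Finset.mem_filter, Finset.mem_range, Finset.mem_Ico] at hm ⊢
                exact ⟨hm.1, hm.2, hm.1⟩
            _ ≤ (Finset.Ico (n-k) n).card := by
                apply Finset.card_le_card
                intro m hm
                simp only [Finset.mem_filter] at hm
                exact hm.2
            _ ≤ k := by rw [Nat.card_Ico]; omega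
  omega

lemma dotProduct_sum' {m N : ℕ} (v : Fin N → ℂ) (w : Fin m → Fin N → ℂ) :
    v ⬝ᵥ (∑ j, w j) = ∑ j, v ⬝ᵥ w j := by
  simp only [dotProduct, Finset.sum_apply, Finset.mul_sum]
  exact Finset.sum_comm

lemma sum_dotProduct' {m N : ℕ} (w : Fin m → Fin N → ℂ) (v : Fin N → ℂ) :
    (∑ j, w j) ⬝ᵥ v = ∑ j, w j ⬝ᵥ v := by
  simp only [dotProduct, Finset.sum_apply, Finset.sum_mul]
  exact Finset.sum_comm

lemma ortho_dot {m N : ℕ} (g : Fin m → Fin N → ℂ)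
    (hg : ∀ i j, star (g i) ⬝ᵥ g j = if i = j then 1 else 0) (a b : Fin m → ℂ) :
    star (∑ j, a j • g j) ⬝ᵥ (∑ j, b j • g j) = ∑ j, (starRingEnd ℂ) (a j) * b j := by
  rw [star_sum]
  have hst : ∀ j, star (a j • g j) = (starRingEnd ℂ) (a j) • star (g j) := fun j => star_smul _ _
  simp only [hst]
  rw [sum_dotProduct']
  refine Finset.sum_congr rfl fun i _ => ?_
  rw [smul_dotProduct, dotProduct_sum']
  simp only [dotProduct_smul, hg]
  rw [Finset.sum_eq_single i]
  · simp
  · intro j _ hj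
    rw [if_neg (fun h => hj h.symm), smul_zero]
  · intro h; exact absurd (Finset.mem_univ i) h

lemma ortho_single {m N : ℕ} (g : Fin m → Fin N → ℂ)
    (hg : ∀ i j, star (g i) ⬝ᵥ g j = if i = j then 1 else 0) (a : Fin m → ℂ) (i : Fin m) :
    star (g i) ⬝ᵥ (∑ j, a j • g j) = a i := by
  rw [dotProduct_sum']
  simp only [dotProduct_smul, hg]
  rw [Finset.sum_eq_single i]
  · simp
  · intro j _ hj
    rw [if_neg (fun h => hj h.symm), smul_zero]
  · intro h; exact absurd (Finset.mem_univ i) h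

lemma ortho_indep {m N : ℕ} (g : Fin m → Fin N → ℂ)
    (hg : ∀ i j, star (g i) ⬝ᵥ g j = if i = j then 1 else 0)
    (a : Fin m → ℂ) (h : ∑ j, a j • g j = 0) : a = 0 := by
  funext i
  have h2 := ortho_single g hg a i
  rw [h, dotProduct_zero] at h2
  simp [h2.symm]

lemma append_dot {p q : ℕ} (x x' : Fin p → ℂ) (y y' : Fin q → ℂ) :
    star (Fin.append x y) ⬝ᵥ Fin.append x' y' = star x ⬝ᵥ x' + star y ⬝ᵥ y' := by
  simp only [dotProduct, Fin.sum_univ_add, Pi.star_apply, Fin.append_left, Fin.append_right]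

lemma sum_smul_append {p q m : ℕ} (a : Fin m → ℂ) (u : Fin m → Fin p → ℂ)
    (v : Fin m → Fin q → ℂ) :
    ∑ j, a j • Fin.append (u j) (v j) = Fin.append (∑ j, a j • u j) (∑ j, a j • v j) := by
  funext t
  refine Fin.addCases (fun i => ?_) (fun i => ?_) t <;>
    simp [Finset.sum_apply, Fin.append_left, Fin.append_right]

lemma block_expand {p q : ℕ} (X : Matrix (Fin (p + q)) (Fin (p + q)) ℂ) (hX : X.IsHermitian)
    (x : Fin p → ℂ) (y : Fin q → ℂ) :
    star (Fin.append x y) ⬝ᵥ (X *ᵥ Fin.append x y)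
      = (star x ⬝ᵥ ((fun i i' => X (Fin.castAdd q i) (Fin.castAdd q i')) *ᵥ x)
          + star y ⬝ᵥ ((fun j j' => X (Fin.natAdd p j) (Fin.natAdd p j')) *ᵥ y))
        + (star x ⬝ᵥ (offBlock X *ᵥ y) + star y ⬝ᵥ ((offBlock X)ᴴ *ᵥ x)) := by
  have happ : ∀ j i, (offBlock X)ᴴ j i = X (Fin.natAdd p j) (Fin.castAdd q i) := by
    intro j i
    rw [conjTranspose_apply, offBlock]
    exact hX.apply _ _
  simp only [dotProduct, Matrix.mulVec, dotProduct, Fin.sum_univ_add, Pi.star_apply,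
    Fin.append_left, Fin.append_right, offBlock, happ, mul_add, Finset.sum_add_distrib]
  ring


lemma quad_flip {p q : ℕ} (X : Matrix (Fin (p + q)) (Fin (p + q)) ℂ) (hX : X.IsHermitian)
    (x : Fin p → ℂ) (y : Fin q → ℂ) :
    star (Fin.append x (-y)) ⬝ᵥ (X *ᵥ Fin.append x (-y))
      = star (Fin.append x y) ⬝ᵥ (X *ᵥ Fin.append x y)
        - 2 * (star x ⬝ᵥ (offBlock X *ᵥ y) + star y ⬝ᵥ ((offBlock X)ᴴ *ᵥ x)) := by
  rw [block_expand X hX x y, block_expand X hX x (-y)]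
  simp only [Matrix.mulVec_neg, dotProduct_neg, star_neg, neg_dotProduct, neg_neg]
  rw [Matrix.mulVec_neg y (fun j j' => X (Fin.natAdd p j) (Fin.natAdd p j')), dotProduct_neg]
  ring

/-- for each `k ≤ q`, `λ_k − λ_n ≥ 2 s_k` and `λ₁ − λ_{n+1−k} ≥ 2 s_k`. -/
theorem lambda_k_inequalities (p q : ℕ) (hq : 1 ≤ q) (hpq : q ≤ p)
    (X : Matrix (Fin (p + q)) (Fin (p + q)) ℂ) (hX : X.IsHermitian)
    (lam : Fin (p + q) → ℝ) (hlam : IsEigList hX lam)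
    (s : Fin q → ℝ) (hs : IsSingList (offBlock X) s) :
    ∀ k : Fin q,
      lam ⟨k, by have := k.isLt; omega⟩ - lam ⟨p + q - 1, by omega⟩ ≥ 2 * s k ∧
      lam ⟨0, by omega⟩ - lam ⟨p + q - 1 - (k : ℕ), by have := k.isLt; omega⟩
        ≥ 2 * s k := by
  obtain ⟨hlamA, e, he⟩ := hlam
  obtain ⟨hsA, hs0, e', he'⟩ := hs
  intro k
  have hkq := k.isLt
  have hminlam : ∀ i, lam ⟨p + q - 1, by omega⟩ ≤ hX.eigenvalues i := by
    intro i
    have h1 : lam (e.symm i) = hX.eigenvalues i := by rw [he, Equiv.apply_symm_apply]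
    rw [← h1]
    refine hlamA ?_
    rw [Fin.le_def]
    have := (e.symm i).isLt
    simp only []
    omega
  have hmaxlam : ∀ i, hX.eigenvalues i ≤ lam ⟨0, by omega⟩ := by
    intro i
    have h1 : lam (e.symm i) = hX.eigenvalues i := by rw [he, Equiv.apply_symm_apply]
    rw [← h1]
    refine hlamA ?_
    rw [Fin.le_def]
    simp only []
    omega
  have raymin : ∀ u : Fin (p + q) → ℂ,
      lam ⟨p + q - 1, by omega⟩ * (star u ⬝ᵥ u).re ≤ (star u ⬝ᵥ (X *ᵥ u)).re := by
    intro u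
    obtain ⟨h1, h2⟩ := quad_expand hX u
    rw [h1, h2, Finset.mul_sum]
    exact Finset.sum_le_sum fun i _ =>
      mul_le_mul_of_nonneg_right (hminlam i) (Complex.normSq_nonneg _)
  have raymax : ∀ u : Fin (p + q) → ℂ,
      (star u ⬝ᵥ (X *ᵥ u)).re ≤ lam ⟨0, by omega⟩ * (star u ⬝ᵥ u).re := by
    intro u
    obtain ⟨h1, h2⟩ := quad_expand hX u
    rw [h1, h2, Finset.mul_sum]
    exact Finset.sum_le_sum fun i _ =>
      mul_le_mul_of_nonneg_right (hmaxlam i) (Complex.normSq_nonneg _)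
  by_cases hk0 : s k ≤ 0
  · have hk0' : s k = 0 := le_antisymm hk0 (hs0 k)
    constructor
    · have h1 : lam ⟨p + q - 1, by omega⟩ ≤ lam ⟨(k : ℕ), by omega⟩ := by
        refine hlamA ?_
        rw [Fin.le_def]
        simp only []
        omega
      rw [hk0']
      simp only [mul_zero, ge_iff_le, sub_nonneg]
      exact h1
    · have h1 : lam ⟨p + q - 1 - (k : ℕ), by omega⟩ ≤ lam ⟨0, by omega⟩ := by
        refine hlamA ?_
        rw [Fin.le_def]
        simp only []
        omega
      rw [hk0']
      simp only [mul_zero, ge_iff_le, sub_nonneg]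
      exact h1
  · push_neg at hk0
    set Y := offBlock X with hYdef
    set hY2 := Matrix.posSemidef_conjTranspose_mul_self Y with hY2def
    set m := (k : ℕ) with hmdef
    set J : Fin (m + 1) → Fin q := fun j => ⟨j.1, by omega⟩ with hJdef
    have hJle : ∀ j, J j ≤ k := by
      intro j
      rw [Fin.le_def]
      have := j.isLt
      simp only [hJdef]
      omega
    have hspos : ∀ j, 0 < s (J j) := fun j => lt_of_lt_of_le hk0 (hsA (hJle j))
    have hsne : ∀ j, (s (J j) : ℂ) ≠ 0 := fun j => by
      exact_mod_cast ne_of_gt (hspos j)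
    set f : Fin (m + 1) → (Fin q → ℂ) :=
      fun j => ⇑(hY2.1.eigenvectorBasis (e' (J j))) with hfdef
    have heig : ∀ j, (Yᴴ * Y) *ᵥ f j = ((s (J j) : ℂ) ^ 2) • f j := by
      intro j
      have h1 := hY2.1.mulVec_eigenvectorBasis (e' (J j))
      have h2 : (Yᴴ * Y) *ᵥ f j = (s (J j) ^ 2 : ℝ) • f j := by
        rw [he' (J j)]
        exact h1
      rw [h2]
      funext t
      simp only [Pi.smul_apply, smul_eq_mul, Complex.real_smul, Complex.ofReal_pow]
    have horthf : ∀ i j, star (f i) ⬝ᵥ f j = if i = j then 1 else 0 := by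
      intro i j
      have horm := hY2.1.eigenvectorBasis.orthonormal
      rw [orthonormal_iff_ite] at horm
      have h2 := horm (e' (J i)) (e' (J j))
      rw [PiLp.inner_apply] at h2
      simp only [RCLike.inner_apply] at h2
      have h3 : star (f i) ⬝ᵥ f j
          = ∑ t, (starRingEnd ℂ) (f i t) * f j t := by
        simp [dotProduct, Pi.star_apply, RCLike.star_def]
      have h5 : star (f i) ⬝ᵥ f j = if e' (J i) = e' (J j) then 1 else 0 := by
        rw [h3, ← h2]; exact Finset.sum_congr rfl fun t _ => mul_comm _ _
      rw [h5]
      by_cases hij : i = j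
      · rw [if_pos hij, if_pos (by rw [hij])]
      · rw [if_neg hij, if_neg ?_]
        intro hh
        have h6 := e'.injective hh
        have h7 : (J i).1 = (J j).1 := by rw [h6]
        simp only [hJdef] at h7
        exact hij (Fin.ext h7)
    set uu : Fin (m + 1) → Fin p → ℂ :=
      fun j => ((s (J j) : ℂ))⁻¹ • (Y *ᵥ f j) with huudef
    have hYf : ∀ j, Y *ᵥ f j = (s (J j) : ℂ) • uu j := by
      intro j
      simp only [huudef]
      rw [smul_smul, mul_inv_cancel₀ (hsne j), one_smul]
    have hYHu : ∀ j, Yᴴ *ᵥ uu j = (s (J j) : ℂ) • f j := by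
      intro j
      simp only [huudef]
      rw [Matrix.mulVec_smul, Matrix.mulVec_mulVec, heig j, smul_smul]
      rw [show (s (J j) : ℂ)⁻¹ * (s (J j) : ℂ) ^ 2 = (s (J j) : ℂ) by
        rw [pow_two, ← mul_assoc, inv_mul_cancel₀ (hsne j), one_mul]]
    have huu : ∀ i j, star (uu i) ⬝ᵥ uu j = if i = j then 1 else 0 := by
      intro i j
      simp only [huudef]
      rw [star_smul, smul_dotProduct, dotProduct_smul]
      rw [Matrix.star_mulVec, ← Matrix.dotProduct_mulVec, Matrix.mulVec_mulVec, heig j,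
        dotProduct_smul, horthf i j]
      by_cases hij : i = j
      · subst hij
        rw [if_pos rfl]
        simp only [smul_eq_mul, mul_one, star_inv₀, RCLike.star_def, Complex.conj_ofReal]
        have hne := hsne i
        field_simp
      · rw [if_neg hij]
        simp
    set wp : Fin (m + 1) → (Fin (p + q) → ℂ) := fun j => Fin.append (uu j) (f j) with hwpdef
    set wm : Fin (m + 1) → (Fin (p + q) → ℂ) := fun j => Fin.append (uu j) (-(f j)) with hwmdef
    -- per-coefficient computations
    have hsum_p : ∀ a : Fin (m + 1) → ℂ,
        ∑ j, a j • wp j = Fin.append (∑ j, a j • uu j) (∑ j, a j • f j) := by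
      intro a
      simp only [hwpdef]
      exact sum_smul_append a uu f
    have hsum_m : ∀ a : Fin (m + 1) → ℂ,
        ∑ j, a j • wm j = Fin.append (∑ j, a j • uu j) (-(∑ j, a j • f j)) := by
      intro a
      simp only [hwmdef]
      rw [sum_smul_append a uu (fun j => -(f j))]
      congr 1
      simp [smul_neg, Finset.sum_neg_distrib]
    have hind_p : ∀ a : Fin (m + 1) → ℂ, ∑ j, a j • wp j = 0 → a = 0 := by
      intro a h
      rw [hsum_p a] at h
      have hy : ∑ j, a j • f j = 0 := by
        funext t
        have := congrFun h (Fin.natAdd p t)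
        rwa [Fin.append_right] at this
      exact ortho_indep f horthf a hy
    have hind_m : ∀ a : Fin (m + 1) → ℂ, ∑ j, a j • wm j = 0 → a = 0 := by
      intro a h
      rw [hsum_m a] at h
      have hy : ∑ j, a j • f j = 0 := by
        have h2 : -(∑ j, a j • f j) = 0 := by
          funext t
          have := congrFun h (Fin.natAdd p t)
          rwa [Fin.append_right] at this
        simpa [neg_eq_zero] using h2
      exact ortho_indep f horthf a hy
    -- quadratic data for a given coefficient vector
    have hdata : ∀ a : Fin (m + 1) → ℂ,
        let x := ∑ j, a j • uu j
        let y := ∑ j, a j • f j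
        let Ta := ∑ j, Complex.normSq (a j)
        let Sa := ∑ j, s (J j) * Complex.normSq (a j)
        star (Fin.append x y) ⬝ᵥ Fin.append x y = ((2 * Ta : ℝ) : ℂ) ∧
        star (Fin.append x (-y)) ⬝ᵥ Fin.append x (-y) = ((2 * Ta : ℝ) : ℂ) ∧
        star x ⬝ᵥ (Y *ᵥ y) = ((Sa : ℝ) : ℂ) ∧
        star y ⬝ᵥ (Yᴴ *ᵥ x) = ((Sa : ℝ) : ℂ) := by
      intro a
      set x := ∑ j, a j • uu j with hxdef
      set y := ∑ j, a j • f j with hydef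
      have hxx : star x ⬝ᵥ x = ∑ j, (starRingEnd ℂ) (a j) * a j := ortho_dot uu huu a a
      have hyy : star y ⬝ᵥ y = ∑ j, (starRingEnd ℂ) (a j) * a j := ortho_dot f horthf a a
      have hconj : ∀ j, (starRingEnd ℂ) (a j) * a j = ((Complex.normSq (a j) : ℝ) : ℂ) := by
        intro j
        rw [Complex.normSq_eq_conj_mul_self]
      have hYy : Y *ᵥ y = ∑ j, (a j * (s (J j) : ℂ)) • uu j := by
        rw [hydef]
        rw [show Y *ᵥ (∑ j, a j • f j) = ∑ j, a j • (Y *ᵥ f j) by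
          simp only [← Matrix.mulVecLin_apply, map_sum, _root_.map_smul]]
        refine Finset.sum_congr rfl fun j _ => ?_
        rw [hYf j, smul_smul]
      have hYHx : Yᴴ *ᵥ x = ∑ j, (a j * (s (J j) : ℂ)) • f j := by
        rw [hxdef]
        rw [show Yᴴ *ᵥ (∑ j, a j • uu j) = ∑ j, a j • (Yᴴ *ᵥ uu j) by
          simp only [← Matrix.mulVecLin_apply, map_sum, _root_.map_smul]]
        refine Finset.sum_congr rfl fun j _ => ?_
        rw [hYHu j, smul_smul]
      refine ⟨?_, ?_, ?_, ?_⟩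
      · rw [append_dot, hxx, hyy]
        push_cast
        rw [← Finset.sum_add_distrib]
        rw [show ((2:ℂ) * ∑ j, (Complex.normSq (a j) : ℂ)) = ∑ j, ((Complex.normSq (a j) : ℂ) + (Complex.normSq (a j) : ℂ)) by rw [Finset.sum_add_distrib]; ring]
        exact Finset.sum_congr rfl fun j _ => by rw [hconj j]
      · rw [append_dot]
        rw [show star (-y) ⬝ᵥ (-y) = star y ⬝ᵥ y by
          rw [star_neg, neg_dotProduct, dotProduct_neg, neg_neg]]
        rw [hxx, hyy]
        push_cast
        rw [← Finset.sum_add_distrib]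
        rw [show ((2:ℂ) * ∑ j, (Complex.normSq (a j) : ℂ)) = ∑ j, ((Complex.normSq (a j) : ℂ) + (Complex.normSq (a j) : ℂ)) by rw [Finset.sum_add_distrib]; ring]
        exact Finset.sum_congr rfl fun j _ => by rw [hconj j]
      · rw [hYy, hxdef, ortho_dot uu huu a (fun j => a j * (s (J j) : ℂ))]
        push_cast
        refine Finset.sum_congr rfl fun j _ => ?_
        rw [show (starRingEnd ℂ) (a j) * (a j * (s (J j) : ℂ))
            = (s (J j) : ℂ) * ((starRingEnd ℂ) (a j) * a j) by ring, hconj j]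
      · rw [hYHx, hydef, ortho_dot f horthf a (fun j => a j * (s (J j) : ℂ))]
        push_cast
        refine Finset.sum_congr rfl fun j _ => ?_
        rw [show (starRingEnd ℂ) (a j) * (a j * (s (J j) : ℂ))
            = (s (J j) : ℂ) * ((starRingEnd ℂ) (a j) * a j) by ring, hconj j]
    have hTa0 : ∀ a : Fin (m + 1) → ℂ, 0 ≤ ∑ j, Complex.normSq (a j) :=
      fun a => Finset.sum_nonneg fun j _ => Complex.normSq_nonneg _
    have hSaTa : ∀ a : Fin (m + 1) → ℂ,
        s k * ∑ j, Complex.normSq (a j) ≤ ∑ j, s (J j) * Complex.normSq (a j) := by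
      intro a
      rw [Finset.mul_sum]
      exact Finset.sum_le_sum fun j _ =>
        mul_le_mul_of_nonneg_right (hsA (hJle j)) (Complex.normSq_nonneg _)
    constructor
    · -- first inequality
      set c1 : ℝ := lam ⟨p + q - 1, by omega⟩ + 2 * s k with hc1def
      have hray : ∀ a : Fin (m + 1) → ℂ,
          c1 * (star (∑ j, a j • wp j) ⬝ᵥ (∑ j, a j • wp j)).re
            ≤ (star (∑ j, a j • wp j) ⬝ᵥ (X *ᵥ ∑ j, a j • wp j)).re := by
        intro a
        obtain ⟨hN, hN', hcr1, hcr2⟩ := hdata a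
        set x := ∑ j, a j • uu j
        set y := ∑ j, a j • f j
        set Ta := ∑ j, Complex.normSq (a j) with hTadef
        set Sa := ∑ j, s (J j) * Complex.normSq (a j) with hSadef
        rw [hsum_p a]
        have hflip := quad_flip X hX x y
        rw [← hYdef, hcr1, hcr2] at hflip
        have hQ : (star (Fin.append x y) ⬝ᵥ (X *ᵥ Fin.append x y)).re
            = (star (Fin.append x (-y)) ⬝ᵥ (X *ᵥ Fin.append x (-y))).re + 4 * Sa := by
          rw [hflip]
          rw [show (2 : ℂ) * (((Sa : ℝ) : ℂ) + ((Sa : ℝ) : ℂ)) = ((4 * Sa : ℝ) : ℂ) by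
            push_cast; ring]
          rw [Complex.sub_re, Complex.ofReal_re]
          ring
        have hmin := raymin (Fin.append x (-y))
        rw [hN'] at hmin
        rw [Complex.ofReal_re] at hmin
        rw [hN, Complex.ofReal_re, hQ]
        have h1 := hSaTa a
        have h2 := hTa0 a
        rw [hc1def]
        nlinarith [hmin]
      have hcard := key_lower hX c1 wp hind_p hray
      have hge := lam_ge lam hX.eigenvalues hlamA e he m (by omega) c1 hcard
      rw [hc1def] at hge
      have hkeq : lam ⟨(k : ℕ), by omega⟩ = lam ⟨m, by omega⟩ := rfl
      rw [ge_iff_le]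
      linarith [hge, hkeq]
    · -- second inequality
      set c2 : ℝ := lam ⟨0, by omega⟩ - 2 * s k with hc2def
      have hray : ∀ a : Fin (m + 1) → ℂ,
          (star (∑ j, a j • wm j) ⬝ᵥ (X *ᵥ ∑ j, a j • wm j)).re
            ≤ c2 * (star (∑ j, a j • wm j) ⬝ᵥ (∑ j, a j • wm j)).re := by
        intro a
        obtain ⟨hN, hN', hcr1, hcr2⟩ := hdata a
        set x := ∑ j, a j • uu j
        set y := ∑ j, a j • f j
        set Ta := ∑ j, Complex.normSq (a j) with hTadef
        set Sa := ∑ j, s (J j) * Complex.normSq (a j) with hSadef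
        rw [hsum_m a]
        have hflip := quad_flip X hX x y
        rw [← hYdef, hcr1, hcr2] at hflip
        have hQ : (star (Fin.append x (-y)) ⬝ᵥ (X *ᵥ Fin.append x (-y))).re
            = (star (Fin.append x y) ⬝ᵥ (X *ᵥ Fin.append x y)).re - 4 * Sa := by
          rw [hflip]
          rw [show (2 : ℂ) * (((Sa : ℝ) : ℂ) + ((Sa : ℝ) : ℂ)) = ((4 * Sa : ℝ) : ℂ) by
            push_cast; ring]
          rw [Complex.sub_re, Complex.ofReal_re]
        have hmax := raymax (Fin.append x y)
        rw [hN] at hmax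
        rw [Complex.ofReal_re] at hmax
        rw [hN', Complex.ofReal_re, hQ]
        have h1 := hSaTa a
        have h2 := hTa0 a
        rw [hc2def]
        nlinarith [hmax]
      have hcard := key_upper hX c2 wm hind_m hray
      have hle := lam_le lam hX.eigenvalues hlamA e he m (by omega) (by omega) c2 hcard
      rw [hc2def] at hle
      have hkeq : lam ⟨p + q - 1 - (k : ℕ), by omega⟩ = lam ⟨p + q - 1 - m, by omega⟩ := rfl
      rw [ge_iff_le]
      linarith [hle, hkeq]
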